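/- arXiv:1708.00557 — 2 statements merged into one kernel-verified Lean document; each statement's English description precedes it below -/
import Mathlib

section
/- Let A ∈ ℝ^{m×n}, x ∈ ℝ^n, r ∈ ℝ^m with r ≠ 0, and let M be an invertible symmetric n×n matrix. Define K = M⁻¹ ( ((2/‖r‖²) Aᵀ r rᵀ − Aᵀ) ([xᵀ, −1] ⊗ I_m) − [I_n ⊗ rᵀ, 0_{n×m}] ). Then K Kᵀ = M⁻¹ ( (1+‖x‖²) Aᵀ A − Aᵀ r xᵀ − x rᵀ A + ‖r‖² I_n ) M⁻¹. -/
open Matrix Kronecker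

/-- The Euclidean norm of a real vector. -/
noncomputable def stlsEnorm {n : Type*} [Fintype n] (v : n → ℝ) : ℝ :=
  Real.sqrt (∑ i, v i ^ 2)

/-- The row vector `[xᵀ, −1]` of length `n+1`. -/
def rowAug {n : ℕ} (x : Fin n → ℝ) : Matrix Unit (Fin n ⊕ Unit) ℝ :=
  Matrix.of fun _ j => Sum.elim x (fun _ => (-1 : ℝ)) j

/-- The STLS Fréchet derivative matrix
`K = M⁻¹(((2/‖r‖²)Aᵀ r rᵀ − Aᵀ)([xᵀ,−1] ⊗ I_m) − [I_n ⊗ rᵀ, 0_{n×m}])`. -/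
noncomputable def KSTLS {m n : ℕ} (A : Matrix (Fin m) (Fin n) ℝ) (x : Fin n → ℝ)
    (r : Fin m → ℝ) (M : Matrix (Fin n) (Fin n) ℝ) :
    Matrix (Fin n) ((Fin n ⊕ Unit) × Fin m) ℝ :=
  M⁻¹ *
    (((2 / stlsEnorm r ^ 2) • (Aᵀ * vecMulVec r r) - Aᵀ) *
        Matrix.reindex (Equiv.punitProd (Fin m)) (Equiv.refl _)
          (rowAug x ⊗ₖ (1 : Matrix (Fin m) (Fin m) ℝ)) -
      Matrix.reindex (Equiv.prodPUnit (Fin n))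
        ((Equiv.sumProdDistrib (Fin n) Unit (Fin m)).symm)
        (fromCols ((1 : Matrix (Fin n) (Fin n) ℝ) ⊗ₖ Matrix.of (fun (_ : Unit) k => r k))
          (0 : Matrix (Fin n × Unit) (Unit × Fin m) ℝ)))

/-! ### Auxiliary definitions and lemmas -/

/-- The matrix `[xᵀ, −1] ⊗ I_m`, reindexed. -/
noncomputable def Pmat {m n : ℕ} (x : Fin n → ℝ) :
    Matrix (Fin m) ((Fin n ⊕ Unit) × Fin m) ℝ :=
  Matrix.reindex (Equiv.punitProd (Fin m)) (Equiv.refl _)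
    (rowAug x ⊗ₖ (1 : Matrix (Fin m) (Fin m) ℝ))

/-- The matrix `[I_n ⊗ rᵀ, 0]`, reindexed. -/
noncomputable def Qmat {m n : ℕ} (r : Fin m → ℝ) :
    Matrix (Fin n) ((Fin n ⊕ Unit) × Fin m) ℝ :=
  Matrix.reindex (Equiv.prodPUnit (Fin n))
    ((Equiv.sumProdDistrib (Fin n) Unit (Fin m)).symm)
    (fromCols ((1 : Matrix (Fin n) (Fin n) ℝ) ⊗ₖ Matrix.of (fun (_ : Unit) k => r k))
      (0 : Matrix (Fin n × Unit) (Unit × Fin m) ℝ))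

lemma Pmat_apply {m n : ℕ} (x : Fin n → ℝ) (i : Fin m) (s : Fin n ⊕ Unit) (k : Fin m) :
    Pmat x i (s, k) = Sum.elim x (fun _ => (-1:ℝ)) s * (if i = k then 1 else 0) := by
  simp [Pmat, rowAug, Matrix.one_apply]

lemma Qmat_apply_inl {m n : ℕ} (r : Fin m → ℝ) (a j : Fin n) (k : Fin m) :
    Qmat (n := n) r a (Sum.inl j, k) = (if a = j then 1 else 0) * r k := by
  simp [Qmat, Matrix.one_apply]

lemma Qmat_apply_inr {m n : ℕ} (r : Fin m → ℝ) (a : Fin n) (u : Unit) (k : Fin m) :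
    Qmat (n := n) r a (Sum.inr u, k) = 0 := by
  simp [Qmat]

lemma stlsEnorm_sq {n : Type*} [Fintype n] (v : n → ℝ) : stlsEnorm v ^ 2 = ∑ i, v i ^ 2 := by
  rw [stlsEnorm, Real.sq_sqrt]; positivity

lemma stlsEnorm_sq_ne {n : Type*} [Fintype n] {v : n → ℝ} (hv : v ≠ 0) : stlsEnorm v ^ 2 ≠ 0 := by
  rw [stlsEnorm_sq]
  intro h
  apply hv
  funext i
  have h2 := Finset.sum_eq_zero_iff_of_nonneg
    (fun j (_ : j ∈ Finset.univ) => sq_nonneg (v j)) |>.mp h i (Finset.mem_univ i)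
  simpa using pow_eq_zero_iff (n := 2) (by norm_num) |>.mp h2

lemma PPt {m n : ℕ} (x : Fin n → ℝ) :
    Pmat (m := m) x * (Pmat (m := m) x)ᵀ = (1 + stlsEnorm x ^ 2) • (1 : Matrix (Fin m) (Fin m) ℝ) := by
  ext i i'
  rw [Matrix.mul_apply]
  simp only [Matrix.transpose_apply, Matrix.smul_apply, Matrix.one_apply, smul_eq_mul]
  rw [Fintype.sum_prod_type]
  simp only [Pmat_apply, Fintype.sum_sum_type, stlsEnorm_sq]
  simp [mul_ite, ite_mul, Finset.sum_ite_eq', Finset.mul_sum, sq, mul_comm, mul_assoc]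
  by_cases h : i = i' <;> simp [h, sq] <;> ring

lemma PQt {m n : ℕ} (x : Fin n → ℝ) (r : Fin m → ℝ) :
    Pmat (m := m) x * (Qmat (n := n) r)ᵀ = vecMulVec r x := by
  ext i a
  rw [Matrix.mul_apply, Fintype.sum_prod_type]
  simp only [Matrix.transpose_apply, Fintype.sum_sum_type, Pmat_apply, Qmat_apply_inl,
    Qmat_apply_inr, vecMulVec_apply]
  simp [mul_ite, ite_mul, Finset.sum_ite_eq', mul_comm]

lemma QQt {m n : ℕ} (r : Fin m → ℝ) :
    Qmat (n := n) r * (Qmat (n := n) r)ᵀ = stlsEnorm r ^ 2 • (1 : Matrix (Fin n) (Fin n) ℝ) := by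
  ext a b
  rw [Matrix.mul_apply, Fintype.sum_prod_type]
  simp only [Matrix.transpose_apply, Fintype.sum_sum_type, Qmat_apply_inl, Qmat_apply_inr,
    Matrix.smul_apply, Matrix.one_apply, smul_eq_mul, stlsEnorm_sq]
  simp [mul_ite, ite_mul, Finset.sum_ite_eq', sq]

lemma vmv_mul_vmv {m n q : ℕ} (u : Fin m → ℝ) (v w : Fin n → ℝ) (z : Fin q → ℝ) :
    vecMulVec u v * vecMulVec w z = (∑ k, v k * w k) • vecMulVec u z := by
  ext i j
  simp [Matrix.mul_apply, vecMulVec_apply, Finset.mul_sum, Finset.sum_mul]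
  congr 1; funext k; ring

lemma vmv_transpose {m n : ℕ} (u : Fin m → ℝ) (v : Fin n → ℝ) :
    (vecMulVec u v)ᵀ = vecMulVec v u := by
  ext i j; simp [vecMulVec_apply, mul_comm]

/-- Equation (eqblk5): `K Kᵀ = M⁻¹((1+‖x‖²)AᵀA − Aᵀr xᵀ − x rᵀA + ‖r‖²I)M⁻¹`. -/
theorem KSTLS_mul_transpose {m n : ℕ} (A : Matrix (Fin m) (Fin n) ℝ) (x : Fin n → ℝ)
    (r : Fin m → ℝ) (M : Matrix (Fin n) (Fin n) ℝ) (hM : IsUnit M) (hMs : Mᵀ = M)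
    (hr : r ≠ 0) :
    KSTLS A x r M * (KSTLS A x r M)ᵀ =
      M⁻¹ *
        ((1 + stlsEnorm x ^ 2) • (Aᵀ * A) - Aᵀ * vecMulVec r x - vecMulVec x r * A +
          stlsEnorm r ^ 2 • (1 : Matrix (Fin n) (Fin n) ℝ)) * M⁻¹ := by
  set S : ℝ := stlsEnorm r ^ 2 with hSdef
  have hS0 : S ≠ 0 := stlsEnorm_sq_ne hr
  set c : ℝ := 2 / S with hcdef
  set V : Matrix (Fin n) (Fin m) ℝ := Aᵀ * vecMulVec r r with hVdef
  set G : Matrix (Fin n) (Fin m) ℝ := c • V - Aᵀ with hGdef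
  have hK : KSTLS A x r M = M⁻¹ * (G * Pmat (m := m) x - Qmat r) := rfl
  -- V * A and related identities
  have hrr : (∑ k, r k * r k) = S := by
    rw [hSdef, stlsEnorm_sq]; exact Finset.sum_congr rfl fun k _ => (sq (r k)).symm
  -- G r xᵀ = Aᵀ r xᵀ
  have hGrx : G * vecMulVec r x = Aᵀ * vecMulVec r x := by
    rw [hGdef, Matrix.sub_mul, Matrix.smul_mul, hVdef, Matrix.mul_assoc,
      vmv_mul_vmv, hrr, Matrix.mul_smul, smul_smul]
    have h2 : c * S = 2 := by rw [hcdef]; field_simp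
    rw [h2, two_smul]; abel
  -- G Gᵀ = Aᵀ A
  have hGG : G * Gᵀ = Aᵀ * A := by
    have hWt : (vecMulVec r r)ᵀ = vecMulVec r r := vmv_transpose r r
    have hGt : Gᵀ = c • (vecMulVec r r * A) - A := by
      rw [hGdef, Matrix.transpose_sub, Matrix.transpose_smul, hVdef, Matrix.transpose_mul,
        hWt, Matrix.transpose_transpose]
    rw [hGdef, hGt, Matrix.sub_mul, Matrix.mul_sub, Matrix.mul_sub, Matrix.smul_mul,
      Matrix.mul_smul, Matrix.mul_smul, smul_smul, hVdef]
    rw [Matrix.mul_assoc Aᵀ (vecMulVec r r) (vecMulVec r r * A),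
      ← Matrix.mul_assoc (vecMulVec r r) (vecMulVec r r) A, vmv_mul_vmv, hrr,
      Matrix.smul_mul, Matrix.mul_smul, smul_smul]
    rw [Matrix.smul_mul, Matrix.mul_assoc Aᵀ (vecMulVec r r) A]
    have h2 : c * c * S = c + c := by rw [hcdef]; field_simp; ring
    rw [h2, add_smul]
    abel
  have hQP : Qmat (n := n) r * (Pmat (m := m) x)ᵀ = vecMulVec x r := by
    have h := congrArg Matrix.transpose (PQt x r)
    rw [Matrix.transpose_mul, Matrix.transpose_transpose, vmv_transpose] at h
    exact h
  have hxG : vecMulVec x r * Gᵀ = vecMulVec x r * A := by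
    have h := congrArg Matrix.transpose hGrx
    rw [Matrix.transpose_mul, Matrix.transpose_mul, vmv_transpose,
      Matrix.transpose_transpose] at h
    exact h
  have key : (G * Pmat (m := m) x - Qmat r) * (G * Pmat (m := m) x - Qmat r)ᵀ =
      (1 + stlsEnorm x ^ 2) • (Aᵀ * A) - Aᵀ * vecMulVec r x - vecMulVec x r * A +
        S • (1 : Matrix (Fin n) (Fin n) ℝ) := by
    rw [Matrix.transpose_sub, Matrix.transpose_mul, Matrix.sub_mul, Matrix.mul_sub,
      Matrix.mul_sub]
    rw [← Matrix.mul_assoc (G * Pmat (m := m) x) (Pmat (m := m) x)ᵀ Gᵀ, Matrix.mul_assoc G (Pmat (m := m) x) (Pmat (m := m) x)ᵀ,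
      PPt, Matrix.mul_smul, Matrix.mul_one, Matrix.smul_mul, hGG]
    rw [Matrix.mul_assoc G (Pmat (m := m) x) (Qmat r)ᵀ, PQt, hGrx]
    rw [← Matrix.mul_assoc (Qmat r) (Pmat (m := m) x)ᵀ Gᵀ, hQP, hxG, QQt]
    abel
  rw [hK, Matrix.transpose_mul, Matrix.transpose_nonsing_inv, hMs]
  rw [Matrix.mul_assoc M⁻¹ (G * Pmat (m := m) x - Qmat r) _,
    ← Matrix.mul_assoc (G * Pmat (m := m) x - Qmat r) _ M⁻¹, key, ← Matrix.mul_assoc]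
end

section
/- Let A ∈ ℝ^{m×n}, σ ∈ ℝ with M = Aᵀ A − σ² I_n invertible, x = M⁻¹ Aᵀ b, r = A x − b. Then (1+‖x‖²) Aᵀ A − Aᵀ r xᵀ − x rᵀ A + ‖r‖² I_n = (1+‖x‖²)(Aᵀ A + σ² (I_n − (2/(1+‖x‖²)) x xᵀ)) + (‖r‖² − σ²(1+‖x‖²)) I_n, and when additionally ‖r‖² = σ²(1+‖x‖²) (which holds for the TLS solution), it equals (1+‖x‖²)(Aᵀ A + σ²(I_n − (2/(1+‖x‖²)) x xᵀ)). -/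
open Matrix

/-- The Euclidean norm of a real vector. -/
noncomputable def euclidEnorm {n : Type*} [Fintype n] (v : n → ℝ) : ℝ :=
  Real.sqrt (∑ i, v i ^ 2)

/-- Baboulin–Gratton's identity (eqform21) for the TLS/STLS condition-number kernel. -/
theorem kernel_baboulin_gratton {m n : ℕ} (A : Matrix (Fin m) (Fin n) ℝ) (b : Fin m → ℝ)
    (σ : ℝ) (hM : IsUnit (Aᵀ * A - σ ^ 2 • (1 : Matrix (Fin n) (Fin n) ℝ)))
    (x : Fin n → ℝ) (r : Fin m → ℝ)
    (hx : x = (Aᵀ * A - σ ^ 2 • (1 : Matrix (Fin n) (Fin n) ℝ))⁻¹ *ᵥ (Aᵀ *ᵥ b))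
    (hr : r = A *ᵥ x - b) :
    (1 + euclidEnorm x ^ 2) • (Aᵀ * A) - Aᵀ * vecMulVec r x - vecMulVec x r * A +
          euclidEnorm r ^ 2 • (1 : Matrix (Fin n) (Fin n) ℝ) =
        (1 + euclidEnorm x ^ 2) •
            (Aᵀ * A +
              σ ^ 2 • ((1 : Matrix (Fin n) (Fin n) ℝ) - (2 / (1 + euclidEnorm x ^ 2)) • vecMulVec x x)) +
          (euclidEnorm r ^ 2 - σ ^ 2 * (1 + euclidEnorm x ^ 2)) • (1 : Matrix (Fin n) (Fin n) ℝ) ∧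
      (euclidEnorm r ^ 2 = σ ^ 2 * (1 + euclidEnorm x ^ 2) →
        (1 + euclidEnorm x ^ 2) • (Aᵀ * A) - Aᵀ * vecMulVec r x - vecMulVec x r * A +
            euclidEnorm r ^ 2 • (1 : Matrix (Fin n) (Fin n) ℝ) =
          (1 + euclidEnorm x ^ 2) •
            (Aᵀ * A +
              σ ^ 2 • ((1 : Matrix (Fin n) (Fin n) ℝ) - (2 / (1 + euclidEnorm x ^ 2)) • vecMulVec x x))) := by
  set M : Matrix (Fin n) (Fin n) ℝ := Aᵀ * A - σ ^ 2 • (1 : Matrix (Fin n) (Fin n) ℝ) with hMdef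
  -- M x = Aᵀ b
  have hMx : M *ᵥ x = Aᵀ *ᵥ b := by
    rw [hx, mulVec_mulVec, Matrix.mul_nonsing_inv M
      ((Matrix.isUnit_iff_isUnit_det M).mp hM), one_mulVec]
  -- key: Aᵀ r = σ² x
  have key : Aᵀ *ᵥ r = σ ^ 2 • x := by
    have h1 : Aᵀ *ᵥ (A *ᵥ x) = M *ᵥ x + σ ^ 2 • x := by
      rw [hMdef, sub_mulVec, smul_mulVec, one_mulVec, mulVec_mulVec,
        sub_add_cancel]
    rw [hr, mulVec_sub, h1, hMx]
    abel
  have hnorm : euclidEnorm x ^ 2 = ∑ i, x i ^ 2 := by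
    rw [euclidEnorm, Real.sq_sqrt (Finset.sum_nonneg fun i _ => sq_nonneg _)]
  have h0 : (1 + euclidEnorm x ^ 2) ≠ 0 := by
    have : (0:ℝ) ≤ euclidEnorm x ^ 2 := sq_nonneg _
    positivity
  -- the two rank-one products
  have hP1 : Aᵀ * vecMulVec r x = σ ^ 2 • vecMulVec x x := by
    ext i j
    have := congrFun key i
    simp only [mulVec, dotProduct, Pi.smul_apply, smul_eq_mul] at this
    simp only [mul_apply, vecMulVec_apply, Matrix.smul_apply, smul_eq_mul]
    calc ∑ k, Aᵀ i k * (r k * x j) = (∑ k, Aᵀ i k * r k) * x j := by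
          rw [Finset.sum_mul]; congr 1; ext k; ring
      _ = σ ^ 2 * (x i * x j) := by rw [this]; ring
  have hP2 : vecMulVec x r * A = σ ^ 2 • vecMulVec x x := by
    ext i j
    have := congrFun key j
    simp only [mulVec, dotProduct, Pi.smul_apply, smul_eq_mul] at this
    simp only [mul_apply, vecMulVec_apply, Matrix.smul_apply, smul_eq_mul, transpose_apply] at this ⊢
    calc ∑ k, x i * r k * A k j = x i * (∑ k, A k j * r k) := by
          rw [Finset.mul_sum]; congr 1; ext k; ring
      _ = σ ^ 2 * (x i * x j) := by rw [this]; ring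
  have main : (1 + euclidEnorm x ^ 2) • (Aᵀ * A) - Aᵀ * vecMulVec r x - vecMulVec x r * A +
          euclidEnorm r ^ 2 • (1 : Matrix (Fin n) (Fin n) ℝ) =
        (1 + euclidEnorm x ^ 2) •
            (Aᵀ * A +
              σ ^ 2 • ((1 : Matrix (Fin n) (Fin n) ℝ) - (2 / (1 + euclidEnorm x ^ 2)) • vecMulVec x x)) +
          (euclidEnorm r ^ 2 - σ ^ 2 * (1 + euclidEnorm x ^ 2)) • (1 : Matrix (Fin n) (Fin n) ℝ) := by
    rw [hP1, hP2]
    ext i j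
    simp only [Matrix.add_apply, Matrix.sub_apply, Matrix.smul_apply, smul_eq_mul, one_apply]
    split_ifs with h <;> field_simp <;> ring
  refine ⟨main, fun hrs => ?_⟩
  rw [main, hrs]
  simp
end
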